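/- Let A be a real n×m matrix and let t ≥ 1 be a natural number such that every nonzero x ∈ Ker(A) satisfies ‖x‖₀ ≥ 2t+1. Then there exist constants u and w with 0 < u ≤ w ≤ λ_max(AᵀA) such that u‖x‖₂² ≤ ‖Ax‖₂² ≤ w‖x‖₂² for every x ∈ ℝ^m with ‖x‖₀ ≤ 2t. -/

import Mathlib

/-- The number of nonzero entries of a vector (the "l0-norm"). -/
noncomputable def l0norm {m : ℕ} (x : Fin m → ℝ) : ℕ :=
  (Finset.univ.filter (fun i => x i ≠ 0)).card

/-- The Euclidean norm of a vector in `ℝ^k`. -/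
noncomputable def l2norm {k : ℕ} (x : Fin k → ℝ) : ℝ :=
  Real.sqrt (∑ i, (x i) ^ 2)

/-- Corollary 4: if every nonzero kernel vector of `A` has at least `2t+1`
nonzero entries (`t ≥ 1`), then there exist constants `0 < u ≤ w ≤ λ_max(AᵀA)` such that
`u ‖x‖₂² ≤ ‖A x‖₂² ≤ w ‖x‖₂²` for every `x` with `‖x‖₀ ≤ 2t`.  Here `λ_max(AᵀA)` is the
largest eigenvalue of `AᵀA`, characterized as the greatest element of its set of
eigenvalues. -/
lemma sq_l2norm {k : ℕ} (x : Fin k → ℝ) : (l2norm x) ^ 2 = ∑ i, (x i) ^ 2 := by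
  rw [l2norm, Real.sq_sqrt]
  exact Finset.sum_nonneg fun i _ => sq_nonneg _

-- Rayleigh upper bound
lemma rayleigh_upper {n m : ℕ} (A : Matrix (Fin n) (Fin m) ℝ) (lamMax : ℝ)
    (hub : ∀ μ ∈ {μ : ℝ | ∃ v : Fin m → ℝ, v ≠ 0 ∧
      (A.transpose * A).mulVec v = μ • v}, μ ≤ lamMax)
    (x : Fin m → ℝ) :
    ∑ i, (A.mulVec x i) ^ 2 ≤ lamMax * ∑ i, (x i) ^ 2 := by
  have hM : (A.transpose * A).IsHermitian := by
    have h := Matrix.isHermitian_conjTranspose_mul_self A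
    rwa [Matrix.conjTranspose_eq_transpose_of_trivial] at h
  have heig : ∀ i, hM.eigenvalues i ≤ lamMax := fun i => by
    refine hub _ ⟨hM.eigenvectorBasis i, ?_, hM.mulVec_eigenvectorBasis i⟩
    have := hM.eigenvectorBasis.orthonormal.ne_zero i
    intro h
    apply this
    ext j
    exact congrFun h j
  set U : Matrix (Fin m) (Fin m) ℝ := (Matrix.IsHermitian.eigenvectorUnitary hM : Matrix (Fin m) (Fin m) ℝ) with hU
  have hUU : U * star U = 1 := (Matrix.mem_unitaryGroup_iff).mp (Matrix.IsHermitian.eigenvectorUnitary hM).2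
  set y : Fin m → ℝ := (star U).mulVec x with hy
  have key : ∀ z : Fin m → ℝ, dotProduct x (U.mulVec z) = dotProduct y z := by
    intro z
    rw [Matrix.dotProduct_mulVec, hy]
    congr 1
    ext j
    simp [Matrix.mulVec, Matrix.vecMul, dotProduct, Matrix.conjTranspose_apply, mul_comm]
  have h1 : ∑ i, (A.mulVec x i) ^ 2 = dotProduct x ((A.transpose * A).mulVec x) := by
    rw [← Matrix.mulVec_mulVec, Matrix.dotProduct_mulVec, Matrix.vecMul_transpose]
    simp [dotProduct, sq]
  have h2 : ∑ i, (x i) ^ 2 = dotProduct x x := by simp [dotProduct, sq]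
  have h3 : dotProduct x ((A.transpose * A).mulVec x)
      = ∑ i, hM.eigenvalues i * (y i) ^ 2 := by
    conv_lhs => rw [hM.spectral_theorem, Unitary.conjStarAlgAut_apply]
    rw [← Matrix.mulVec_mulVec, ← Matrix.mulVec_mulVec, key]
    simp [dotProduct, Matrix.mulVec_diagonal]
    ring_nf
    exact Finset.sum_congr rfl fun i _ => by ring
  have h4 : dotProduct x x = ∑ i, (y i) ^ 2 := by
    have : ∑ i, (y i) ^ 2 = dotProduct x (U.mulVec y) := by
      rw [key]; simp [dotProduct, sq]
    rw [this, hy, Matrix.mulVec_mulVec, hUU, Matrix.one_mulVec]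
  rw [h1, h2, h3, h4, Finset.mul_sum]
  exact Finset.sum_le_sum fun i _ => by
    have := sq_nonneg (y i)
    nlinarith [heig i]

lemma l0norm_smul {m : ℕ} (c : ℝ) (hc : c ≠ 0) (x : Fin m → ℝ) :
    l0norm (fun i => c * x i) = l0norm x := by
  unfold l0norm
  congr 1
  ext i
  simp [hc]

lemma l0norm_closed {m t : ℕ} : IsClosed {x : Fin m → ℝ | l0norm x ≤ 2 * t} := by
  have heq : {x : Fin m → ℝ | l0norm x ≤ 2 * t} =
      ⋃ s ∈ {s : Finset (Fin m) | s.card ≤ 2 * t}, {x | ∀ i ∉ s, x i = 0} := by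
    ext x
    simp only [Set.mem_setOf_eq, Set.mem_iUnion]
    constructor
    · intro hx
      exact ⟨Finset.univ.filter (fun i => x i ≠ 0), hx, fun i hi => by
        by_contra h
        exact hi (Finset.mem_filter.mpr ⟨Finset.mem_univ i, h⟩)⟩
    · rintro ⟨s, hs, hsupp⟩
      refine le_trans (Finset.card_le_card ?_) hs
      intro i hi
      by_contra h
      exact (Finset.mem_filter.mp hi).2 (hsupp i h)
  rw [heq]
  refine (Set.toFinite _).isClosed_biUnion fun s _ => ?_
  have : {x : Fin m → ℝ | ∀ i ∉ s, x i = 0} = ⋂ i, ⋂ (_ : i ∉ s), {x | x i = 0} := by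
    ext x; simp
  rw [this]
  exact isClosed_iInter fun i => isClosed_iInter fun _ =>
    isClosed_eq (continuous_apply i) continuous_const

theorem stmt8 (n m : ℕ) (A : Matrix (Fin n) (Fin m) ℝ) (t : ℕ) (ht : 1 ≤ t)
    (hker : ∀ x : Fin m → ℝ, x ≠ 0 → A.mulVec x = 0 → 2 * t + 1 ≤ l0norm x)
    (lamMax : ℝ)
    (hlamMax : IsGreatest {μ : ℝ | ∃ v : Fin m → ℝ, v ≠ 0 ∧
      (A.transpose * A).mulVec v = μ • v} lamMax) :
    ∃ u w : ℝ, 0 < u ∧ u ≤ w ∧ w ≤ lamMax ∧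
      ∀ x : Fin m → ℝ, l0norm x ≤ 2 * t →
        u * (l2norm x) ^ 2 ≤ (l2norm (A.mulVec x)) ^ 2 ∧
        (l2norm (A.mulVec x)) ^ 2 ≤ w * (l2norm x) ^ 2 := by
  have hupper := rayleigh_upper A lamMax hlamMax.2
  -- m must be positive
  obtain ⟨v, hv, -⟩ := hlamMax.1
  have hm : 0 < m := by
    by_contra h
    push_neg at h
    interval_cases m
    exact hv (funext fun i => absurd i.2 (by omega))
  -- the function g
  set g : (Fin m → ℝ) → ℝ := fun x => ∑ i, (A.mulVec x i) ^ 2 with hg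
  have hgcont : Continuous g := by
    have : g = fun x => ∑ i, (∑ j, A i j * x j) ^ 2 := by
      funext x
      simp [hg, Matrix.mulVec, dotProduct]
    rw [this]
    exact continuous_finset_sum _ fun i _ =>
      (continuous_finset_sum _ fun j _ => continuous_const.mul (continuous_apply j)).pow 2
  -- compact set K
  set K : Set (Fin m → ℝ) := {x | l0norm x ≤ 2 * t ∧ ∑ i, (x i) ^ 2 = 1} with hKdef
  have hKclosed : IsClosed K :=
    l0norm_closed.inter (isClosed_eq
      (continuous_finset_sum _ fun i _ => (continuous_apply i).pow 2) continuous_const)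
  have hKsub : K ⊆ Metric.closedBall 0 1 := by
    intro x hx
    rw [Metric.mem_closedBall, dist_zero_right]
    rw [pi_norm_le_iff_of_nonneg zero_le_one]
    intro i
    rw [Real.norm_eq_abs, ← sq_le_one_iff_abs_le_one]
    calc (x i) ^ 2 ≤ ∑ j, (x j) ^ 2 :=
          Finset.single_le_sum (f := fun j => (x j) ^ 2) (fun j _ => sq_nonneg _) (Finset.mem_univ i)
      _ = 1 := hx.2
  have hKcompact : IsCompact K :=
    (isCompact_closedBall (0 : Fin m → ℝ) 1).of_isClosed_subset hKclosed hKsub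
  have hKne : K.Nonempty := by
    refine ⟨Pi.single ⟨0, hm⟩ 1, ?_, ?_⟩
    · have : l0norm (Pi.single (⟨0, hm⟩ : Fin m) (1:ℝ)) ≤ 1 := by
        unfold l0norm
        refine le_trans (Finset.card_le_card ?_) (by simp : ({⟨0, hm⟩} : Finset (Fin m)).card ≤ 1)
        intro i hi
        simp only [Finset.mem_filter] at hi
        rcases eq_or_ne i ⟨0, hm⟩ with h | h
        · simp [h]
        · exact absurd (Pi.single_eq_of_ne h 1) hi.2
      omega
    · simp [Pi.single_apply]
  obtain ⟨x₀, hx₀K, hmin⟩ := hKcompact.exists_isMinOn hKne hgcont.continuousOn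
  set u : ℝ := g x₀ with hu
  have hu0 : 0 < u := by
    rcases (Finset.sum_nonneg fun i _ => sq_nonneg (A.mulVec x₀ i)).lt_or_eq with h | h
    · exact h
    · exfalso
      have hAx : A.mulVec x₀ = 0 := by
        funext i
        have := (Finset.sum_eq_zero_iff_of_nonneg (fun j _ => sq_nonneg (A.mulVec x₀ j))).mp
          h.symm i (Finset.mem_univ i)
        exact pow_eq_zero_iff (by norm_num) |>.mp this
      have hx₀ne : x₀ ≠ 0 := by
        intro h0
        have := hx₀K.2
        rw [h0] at this
        simp at this
      have h1 := hker x₀ hx₀ne hAx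
      have h2 := hx₀K.1
      omega
  -- key scaling inequality: u * ∑ x² ≤ g x for all x with l0norm ≤ 2t
  have hlow : ∀ x : Fin m → ℝ, l0norm x ≤ 2 * t → u * ∑ i, (x i) ^ 2 ≤ g x := by
    intro x hx
    rcases eq_or_ne x 0 with rfl | hxne
    · simp [hg, Matrix.mulVec_zero]
    · have hS : 0 < ∑ i, (x i) ^ 2 := by
        obtain ⟨i, hi⟩ : ∃ i, x i ≠ 0 := by
          by_contra h
          push_neg at h
          exact hxne (funext h)
        exact Finset.sum_pos' (fun j _ => sq_nonneg _)
          ⟨i, Finset.mem_univ i, by positivity⟩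
      set S := ∑ i, (x i) ^ 2 with hSdef
      set c : ℝ := (Real.sqrt S)⁻¹ with hc
      have hrpos : 0 < Real.sqrt S := Real.sqrt_pos.mpr hS
      have hcpos : 0 < c := inv_pos.mpr hrpos
      have hc2 : c ^ 2 * S = 1 := by
        rw [hc, ← Real.sq_sqrt hS.le]
        field_simp
        rw [Real.sqrt_sq hrpos.le]
      set y : Fin m → ℝ := fun i => c * x i with hy
      have hyK : y ∈ K := by
        constructor
        · rw [hy, l0norm_smul c hcpos.ne' x]; exact hx
        · rw [hy]
          simp only [mul_pow]
          rw [← Finset.mul_sum, ← hSdef, hc2]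
      have hgy : g y = c ^ 2 * g x := by
        have : A.mulVec y = fun i => c * A.mulVec x i := by
          have : y = c • x := by funext i; simp [hy]
          rw [this, Matrix.mulVec_smul]
          rfl
        simp only [hg, this, mul_pow]
        rw [← Finset.mul_sum]
      have hle : g x₀ ≤ g y := hmin hyK
      rw [hgy] at hle
      have hgx0 : 0 ≤ g x := Finset.sum_nonneg fun i _ => sq_nonneg _
      have hc2pos : 0 < c ^ 2 := by positivity
      nlinarith [hle, hc2, hS]
  have huw : u ≤ lamMax := by
    have := hupper x₀
    rw [hx₀K.2, mul_one] at this
    exact this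
  refine ⟨u, lamMax, hu0, huw, le_refl _, fun x hx => ?_⟩
  rw [sq_l2norm, sq_l2norm]
  exact ⟨hlow x hx, hupper x⟩
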